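/- arXiv:2102.05793 — 2 statements merged into one kernel-verified Lean document; each statement's English description precedes it below -/
import Mathlib

section
/- Let x_1,…,x_n ∈ D and let S ⊆ {1,…,n}. Then for every x ∈ D, the posterior variance conditioned on all n points is at most the posterior variance conditioned on the sub-tuple (x_i)_{i∈S}; i.e., adding points to the set of conditioning points cannot increase the Gaussian process posterior variance. -/
open Matrix Real MeasureTheory

noncomputable section

/-- The Gram (kernel) matrix of the kernel `k` at the points `xs`. -/
def kerMat {D : Type*} (k : D → D → ℝ) {t : ℕ} (xs : Fin t → D) :
    Matrix (Fin t) (Fin t) ℝ :=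
  Matrix.of fun i j => k (xs i) (xs j)

/-- The kernel vector `k_t(x) = (k(x_1,x),…,k(x_t,x))`. -/
def kerVec {D : Type*} (k : D → D → ℝ) {t : ℕ} (xs : Fin t → D) (x : D) : Fin t → ℝ :=
  fun i => k (xs i) x

/-- The GP posterior variance `σ_t²(x)` given conditioning points `xs`; for `t = 0`
it equals `k x x` since the empty dot product is `0`. -/
def postVar {D : Type*} (k : D → D → ℝ) (lam : ℝ) {t : ℕ} (xs : Fin t → D) (x : D) : ℝ :=
  k x x -
    kerVec k xs x ⬝ᵥ ((kerMat k xs + lam • (1 : Matrix (Fin t) (Fin t) ℝ))⁻¹ *ᵥ kerVec k xs x)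

/-- The GP posterior mean `μ_t(x)` given conditioning points `xs` and observations `ys`;
for `t = 0` it equals `0`. -/
def postMean {D : Type*} (k : D → D → ℝ) (lam : ℝ) {t : ℕ} (xs : Fin t → D)
    (ys : Fin t → ℝ) (x : D) : ℝ :=
  kerVec k xs x ⬝ᵥ ((kerMat k xs + lam • (1 : Matrix (Fin t) (Fin t) ℝ))⁻¹ *ᵥ ys)

/-- `lam • 1` is positive definite for `lam > 0`. -/
lemma smulOnePosDef {m : ℕ} {lam : ℝ} (hlam : 0 < lam) :
    (lam • (1 : Matrix (Fin m) (Fin m) ℝ)).PosDef := by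
  rw [Matrix.smul_one_eq_diagonal]
  exact Matrix.posDef_diagonal_iff.mpr fun _ => hlam

/-- Variational characterization lower bound: for a symmetric positive definite `M`,
`2 α⬝v - α⬝Mα ≤ v⬝M⁻¹v` for every `α`. -/
lemma quadratic_lower_bound {m : ℕ} (M : Matrix (Fin m) (Fin m) ℝ) (hM : M.PosDef)
    (hMs : Mᵀ = M) (v α : Fin m → ℝ) :
    2 * (α ⬝ᵥ v) - α ⬝ᵥ (M *ᵥ α) ≤ v ⬝ᵥ (M⁻¹ *ᵥ v) := by
  have hdet : IsUnit M.det := isUnit_iff_ne_zero.mpr hM.det_pos.ne'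
  have hinv : M * M⁻¹ = 1 := Matrix.mul_nonsing_inv M hdet
  have h1 : M *ᵥ (M⁻¹ *ᵥ v) = v := by
    rw [Matrix.mulVec_mulVec, hinv, Matrix.one_mulVec]
  have hswap : ∀ a b : Fin m → ℝ, a ⬝ᵥ (M *ᵥ b) = (M *ᵥ a) ⬝ᵥ b := by
    intro a b
    rw [Matrix.dotProduct_mulVec, ← Matrix.mulVec_transpose, hMs]
  set β : Fin m → ℝ := α - M⁻¹ *ᵥ v with hβ
  have h0 : 0 ≤ β ⬝ᵥ (M *ᵥ β) := by
    have := hM.posSemidef.dotProduct_mulVec_nonneg β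
    simpa using this
  have hexp : β ⬝ᵥ (M *ᵥ β) =
      α ⬝ᵥ (M *ᵥ α) - 2 * (α ⬝ᵥ v) + v ⬝ᵥ (M⁻¹ *ᵥ v) := by
    have hMβ : M *ᵥ β = M *ᵥ α - v := by
      rw [hβ, Matrix.mulVec_sub, h1]
    rw [hβ, hMβ, sub_dotProduct, dotProduct_sub, dotProduct_sub]
    have e1 : (M⁻¹ *ᵥ v) ⬝ᵥ (M *ᵥ α) = α ⬝ᵥ v := by
      rw [hswap, h1, dotProduct_comm]
    have e2 : (M⁻¹ *ᵥ v) ⬝ᵥ v = v ⬝ᵥ (M⁻¹ *ᵥ v) := dotProduct_comm _ _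
    rw [e1, e2]
    ring
  linarith [h0, hexp.le, hexp.ge]

/-- Adding points to the set of conditioning points cannot increase the
Gaussian process posterior variance: the posterior variance conditioned on all `n` points
`x_1,…,x_n` is at most the posterior variance conditioned on the sub-tuple `(x_i)_{i ∈ S}`. -/
theorem posterior_variance_antitone_in_conditioning_points {D : Type*} [Nonempty D]
    (k : D → D → ℝ) (lam : ℝ)
    (hsym : ∀ x y : D, k x y = k y x)
    (hPSD : ∀ (m : ℕ) (xs : Fin m → D), (kerMat k xs).PosSemidef)
    (hlam : 0 < lam)
    (n : ℕ) (xs : Fin n → D) (S : Finset (Fin n)) (x : D) :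
    postVar k lam xs x ≤ postVar k lam (fun i => xs (S.orderEmbOfFin rfl i)) x := by
  classical
  set e : Fin S.card → Fin n := fun i => S.orderEmbOfFin rfl i with he
  have einj : Function.Injective e := fun i j h => (S.orderEmbOfFin rfl).injective h
  set xs' : Fin S.card → D := fun i => xs (e i) with hxs'
  set v : Fin n → ℝ := kerVec k xs x with hv
  set w : Fin S.card → ℝ := kerVec k xs' x with hw
  set M : Matrix (Fin n) (Fin n) ℝ :=
    kerMat k xs + lam • (1 : Matrix (Fin n) (Fin n) ℝ) with hM
  set N : Matrix (Fin S.card) (Fin S.card) ℝ :=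
    kerMat k xs' + lam • (1 : Matrix (Fin S.card) (Fin S.card) ℝ) with hN
  have hMpd : M.PosDef := Matrix.PosDef.posSemidef_add (hPSD n xs) (smulOnePosDef hlam)
  have hNpd : N.PosDef := Matrix.PosDef.posSemidef_add (hPSD S.card xs') (smulOnePosDef hlam)
  have hMsym : Mᵀ = M := by
    rw [hM, Matrix.transpose_add, Matrix.transpose_smul, Matrix.transpose_one]
    congr 1
    ext i j
    simp [kerMat, hsym (xs j) (xs i)]
  have hNdet : IsUnit N.det := isUnit_iff_ne_zero.mpr hNpd.det_pos.ne'
  have hNinv : N * N⁻¹ = 1 := Matrix.mul_nonsing_inv N hNdet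
  have hNe : ∀ i j, N i j = M (e i) (e j) := by
    intro i j
    simp only [hN, hM, Matrix.add_apply, Matrix.smul_apply, Matrix.one_apply, kerMat,
      Matrix.of_apply, hxs', smul_eq_mul]
    simp only [einj.eq_iff]
  -- the zero extension of the sub-problem optimizer
  set α0 : Fin S.card → ℝ := N⁻¹ *ᵥ w with hα0
  set α : Fin n → ℝ := fun j => ∑ i, if j = e i then α0 i else 0 with hα
  have hA : ∀ u : Fin n → ℝ, α ⬝ᵥ u = α0 ⬝ᵥ (fun i => u (e i)) := by
    intro u
    simp only [hα, dotProduct]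
    calc ∑ j, (∑ i, if j = e i then α0 i else 0) * u j
        = ∑ j, ∑ i, (if j = e i then α0 i * u j else 0) := by
          refine Finset.sum_congr rfl fun j _ => ?_
          rw [Finset.sum_mul]
          exact Finset.sum_congr rfl fun i _ => by split <;> simp
      _ = ∑ i, ∑ j, (if j = e i then α0 i * u j else 0) := Finset.sum_comm
      _ = ∑ i, α0 i * u (e i) := by
          refine Finset.sum_congr rfl fun i _ => ?_
          simp
  have hveq : (fun i => v (e i)) = w := by
    funext i
    simp [hv, hw, kerVec, hxs']
  have hMα : ∀ i, (M *ᵥ α) (e i) = (N *ᵥ α0) i := by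
    intro i
    simp only [Matrix.mulVec, dotProduct, hα]
    calc ∑ j, M (e i) j * (∑ i', if j = e i' then α0 i' else 0)
        = ∑ j, ∑ i', (if j = e i' then M (e i) j * α0 i' else 0) := by
          refine Finset.sum_congr rfl fun j _ => ?_
          rw [Finset.mul_sum]
          exact Finset.sum_congr rfl fun i' _ => by split <;> simp
      _ = ∑ i', ∑ j, (if j = e i' then M (e i) j * α0 i' else 0) := Finset.sum_comm
      _ = ∑ i', M (e i) (e i') * α0 i' := by
          refine Finset.sum_congr rfl fun i' _ => ?_
          simp
      _ = ∑ i', N i i' * α0 i' := by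
          exact Finset.sum_congr rfl fun i' _ => by rw [hNe]
  have hαMα : α ⬝ᵥ (M *ᵥ α) = α0 ⬝ᵥ (N *ᵥ α0) := by
    rw [hA]
    congr 1
    funext i
    exact hMα i
  have hαv : α ⬝ᵥ v = α0 ⬝ᵥ w := by rw [hA, hveq]
  have hNα0 : N *ᵥ α0 = w := by
    rw [hα0, Matrix.mulVec_mulVec, hNinv, Matrix.one_mulVec]
  have key := quadratic_lower_bound M hMpd hMsym v α
  have hrhs : 2 * (α ⬝ᵥ v) - α ⬝ᵥ (M *ᵥ α) = w ⬝ᵥ (N⁻¹ *ᵥ w) := by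
    rw [hαv, hαMα, hNα0]
    rw [hα0, dotProduct_comm]
    ring
  have : w ⬝ᵥ (N⁻¹ *ᵥ w) ≤ v ⬝ᵥ (M⁻¹ *ᵥ v) := by rw [← hrhs]; exact key
  show k x x - v ⬝ᵥ (M⁻¹ *ᵥ v) ≤ k x x - w ⬝ᵥ (N⁻¹ *ᵥ w)
  linarith
end
end

section
/- For every N ≥ 1 and every tuple of points x_1,…,x_N ∈ D, one has log det(I_N + λ^{-1} K_N) = ∑_{i=1}^N log(1 + λ^{-1} σ_{i-1}²(x_i)), where σ_{i-1}² denotes the posterior variance conditioned on the first i−1 points x_1,…,x_{i-1} and K_N = (k(x_i,x_j))_{i,j=1}^N. -/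
open Matrix Real MeasureTheory

noncomputable section

section Aux

variable {D : Type*} (k : D → D → ℝ) (lam : ℝ)

lemma posDef_aux (hPSD : ∀ (m : ℕ) (xs : Fin m → D), (kerMat k xs).PosSemidef)
    (hlam : 0 < lam) {t : ℕ} (xs : Fin t → D) :
    (kerMat k xs + lam • (1 : Matrix (Fin t) (Fin t) ℝ)).PosDef := by
  refine Matrix.PosDef.posSemidef_add (hPSD t xs) ?_
  rw [Matrix.smul_one_eq_diagonal]
  exact Matrix.PosDef.diagonal fun _ => hlam

lemma det_step (hsym : ∀ x y : D, k x y = k y x)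
    (hPSD : ∀ (m : ℕ) (xs : Fin m → D), (kerMat k xs).PosSemidef)
    (hlam : 0 < lam) {t : ℕ} (xs : Fin (t + 1) → D) :
    (kerMat k xs + lam • (1 : Matrix (Fin (t+1)) (Fin (t+1)) ℝ)).det
      = (kerMat k (xs ∘ Fin.castSucc) + lam • 1).det
        * (lam + postVar k lam (xs ∘ Fin.castSucc) (xs (Fin.last t))) := by
  set A : Matrix (Fin t) (Fin t) ℝ := kerMat k (xs ∘ Fin.castSucc) + lam • 1 with hA
  set v : Fin t → ℝ := kerVec k (xs ∘ Fin.castSucc) (xs (Fin.last t)) with hv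
  have hApd : A.PosDef := posDef_aux k lam hPSD hlam _
  have : Invertible A := A.invertibleOfIsUnitDet (isUnit_iff_ne_zero.mpr hApd.det_pos.ne')
  have hblock : (kerMat k xs + lam • (1 : Matrix (Fin (t+1)) (Fin (t+1)) ℝ))
      = (Matrix.fromBlocks A (Matrix.of fun i (_ : Fin 1) => v i)
          (Matrix.of fun (_ : Fin 1) j => v j)
          (Matrix.of fun (_ _ : Fin 1) => k (xs (Fin.last t)) (xs (Fin.last t)) + lam)).submatrix
        finSumFinEquiv.symm finSumFinEquiv.symm := by
    have hlast : finSumFinEquiv.symm (Fin.last t) = Sum.inr 0 := by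
      rw [Equiv.symm_apply_eq, finSumFinEquiv_apply_right]; rfl
    have hcast : ∀ m : Fin t, finSumFinEquiv.symm (Fin.castSucc m) = Sum.inl m := fun m => by
      rw [Equiv.symm_apply_eq, finSumFinEquiv_apply_left]; rfl
    ext i j
    induction i using Fin.lastCases with
    | last =>
      induction j using Fin.lastCases with
      | last => simp [hlast, kerMat, Matrix.one_apply]
      | cast j =>
        simp [hlast, hcast, hv, kerMat, kerVec, Matrix.one_apply,
          (Fin.castSucc_lt_last j).ne, (Fin.castSucc_lt_last j).ne',
          hsym (xs (Fin.last t)) (xs (Fin.castSucc j))]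
    | cast i =>
      induction j using Fin.lastCases with
      | last =>
        simp [hlast, hcast, hv, kerMat, kerVec, Matrix.one_apply,
          (Fin.castSucc_lt_last i).ne, (Fin.castSucc_lt_last i).ne']
      | cast j => simp [hcast, hA, kerMat, Matrix.one_apply, Fin.castSucc_inj]
  rw [hblock, Matrix.det_submatrix_equiv_self, Matrix.det_fromBlocks₁₁]
  congr 1
  rw [Matrix.det_fin_one]
  rw [invOf_eq_nonsing_inv]
  have hmul : (Matrix.of (fun (_ : Fin 1) j => v j) * A⁻¹
        * Matrix.of (fun i (_ : Fin 1) => v i)) 0 0 = v ⬝ᵥ (A⁻¹ *ᵥ v) := by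
    simp only [Matrix.mul_apply, Matrix.of_apply, dotProduct, Matrix.mulVec,
      Finset.sum_mul, Finset.mul_sum]
    rw [Finset.sum_comm]
    exact Finset.sum_congr rfl fun _ _ => Finset.sum_congr rfl fun _ _ => by ring
  simp only [Matrix.sub_apply, Matrix.of_apply, hmul, postVar, ← hA, ← hv]
  ring

lemma pos_term (hsym : ∀ x y : D, k x y = k y x)
    (hPSD : ∀ (m : ℕ) (xs : Fin m → D), (kerMat k xs).PosSemidef)
    (hlam : 0 < lam) {t : ℕ} (xs : Fin t → D) (x : D) :
    0 < lam + postVar k lam xs x := by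
  have h := det_step k lam hsym hPSD hlam (Fin.snoc xs x)
  have h1 : (Fin.snoc xs x : Fin (t+1) → D) ∘ Fin.castSucc = xs := by
    funext i; simp
  rw [h1, Fin.snoc_last] at h
  have hbig := (posDef_aux k lam hPSD hlam (Fin.snoc xs x : Fin (t+1) → D)).det_pos
  have hsmall := (posDef_aux k lam hPSD hlam xs).det_pos
  rw [h] at hbig
  nlinarith [hbig, hsmall]

lemma det_prod (hsym : ∀ x y : D, k x y = k y x)
    (hPSD : ∀ (m : ℕ) (xs : Fin m → D), (kerMat k xs).PosSemidef)
    (hlam : 0 < lam) : ∀ (t : ℕ) (xs : Fin t → D),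
    (kerMat k xs + lam • (1 : Matrix (Fin t) (Fin t) ℝ)).det
      = ∏ i : Fin t,
          (lam + postVar k lam (fun j : Fin i.1 => xs ⟨j.1, j.2.trans i.2⟩) (xs i)) := by
  intro t
  induction t with
  | zero => intro xs; simp [Matrix.det_fin_zero]
  | succ t ih =>
    intro xs
    rw [det_step k lam hsym hPSD hlam xs, ih (xs ∘ Fin.castSucc), Fin.prod_univ_castSucc]
    rfl

end Aux

/-- For every `N ≥ 1` and every tuple of points `x_1,…,x_N ∈ D`,
`log det(I_N + λ⁻¹ K_N) = ∑_{i=1}^N log(1 + λ⁻¹ σ_{i-1}²(x_i))`, where `σ_{i-1}²` is the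
posterior variance conditioned on the first `i−1` points `x_1,…,x_{i-1}`. -/
theorem logdet_eq_sum_log_posterior_variances {D : Type*} [Nonempty D]
    (k : D → D → ℝ) (lam : ℝ)
    (hsym : ∀ x y : D, k x y = k y x)
    (hPSD : ∀ (m : ℕ) (xs : Fin m → D), (kerMat k xs).PosSemidef)
    (hlam : 0 < lam)
    (N : ℕ) (hN : 1 ≤ N) (xs : Fin N → D) :
    Real.log ((1 + lam⁻¹ • kerMat k xs).det)
      = ∑ i : Fin N,
          Real.log (1 + lam⁻¹ *
            postVar k lam (fun j : Fin i.1 => xs ⟨j.1, j.2.trans i.2⟩) (xs i)) := by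
  have key : (1 + lam⁻¹ • kerMat k xs : Matrix (Fin N) (Fin N) ℝ)
      = lam⁻¹ • (kerMat k xs + lam • 1) := by
    rw [smul_add, smul_smul, inv_mul_cancel₀ hlam.ne', one_smul, add_comm]
  rw [key, Matrix.det_smul, det_prod k lam hsym hPSD hlam N xs]
  rw [Fintype.card_fin, ← Fin.prod_const N lam⁻¹, ← Finset.prod_mul_distrib]
  rw [Real.log_prod]
  · refine Finset.sum_congr rfl fun i _ => ?_
    congr 1
    rw [mul_add, inv_mul_cancel₀ hlam.ne']
  · intro i _
    exact (mul_pos (inv_pos.mpr hlam) (pos_term k lam hsym hPSD hlam _ _)).ne'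
end
end
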